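/- Let α, β be finite signed measures on (S, F), (T, G), dominated respectively by σ-finite positive measures μ, ν. Then the product signed measure α × β is dominated by μ × ν, and its Radon–Nikodym derivative with respect to μ × ν equals (s,t) ↦ (dα/dμ)(s)·(dβ/dν)(t) (μ × ν)-almost everywhere. -/

import Mathlib

open MeasureTheory

theorem product_signedMeasure_rnDeriv
    {S T : Type*} [MeasurableSpace S] [MeasurableSpace T]
    (α : SignedMeasure S) (β : SignedMeasure T)
    (μ : Measure S) (ν : Measure T) [SigmaFinite μ] [SigmaFinite ν]
    (hα : α ≪ᵥ μ.toENNRealVectorMeasure) (hβ : β ≪ᵥ ν.toENNRealVectorMeasure)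
    (ω : SignedMeasure (S × T))
    (hω : ∀ A B, MeasurableSet A → MeasurableSet B →
      ω (A ×ˢ B) = α A * β B) :
    ω ≪ᵥ (μ.prod ν).toENNRealVectorMeasure ∧
      ω.rnDeriv (μ.prod ν) =ᵐ[μ.prod ν]
        fun p => α.rnDeriv μ p.1 * β.rnDeriv ν p.2 := by
  set f : S × T → ℝ := fun p => α.rnDeriv μ p.1 * β.rnDeriv ν p.2 with hf_def
  have hfα := SignedMeasure.integrable_rnDeriv α μ
  have hfβ := SignedMeasure.integrable_rnDeriv β ν
  have hf : Integrable f (μ.prod ν) := hfα.mul_prod hfβ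
  have hαeq : μ.withDensityᵥ (α.rnDeriv μ) = α :=
    SignedMeasure.withDensityᵥ_rnDeriv_eq α μ hα
  have hβeq : ν.withDensityᵥ (β.rnDeriv ν) = β :=
    SignedMeasure.withDensityᵥ_rnDeriv_eq β ν hβ
  have key : ω = (μ.prod ν).withDensityᵥ f := by
    ext s hs
    refine MeasurableSpace.induction_on_inter (C := fun s _ => ω s = ((μ.prod ν).withDensityᵥ f) s)
      generateFrom_prod.symm isPiSystem_prod ?_ ?_ ?_ ?_ s hs
    · simp
    · rintro t ⟨A, hA, B, hB, rfl⟩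
      rw [hω A B hA hB, withDensityᵥ_apply hf (hA.prod hB), ← Measure.prod_restrict,
        hf_def]
      rw [integral_prod_mul (μ := μ.restrict A) (ν := ν.restrict B)
        (α.rnDeriv μ) (β.rnDeriv ν)]
      rw [← withDensityᵥ_apply hfα hA, ← withDensityᵥ_apply hfβ hB, hαeq, hβeq]
    · intro t htm ht
      have huniv : ω Set.univ = ((μ.prod ν).withDensityᵥ f) Set.univ := by
        have : (Set.univ : Set (S × T)) = Set.univ ×ˢ Set.univ := by simp
        rw [this, hω _ _ MeasurableSet.univ MeasurableSet.univ,
          withDensityᵥ_apply hf (MeasurableSet.univ.prod MeasurableSet.univ),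
          ← Measure.prod_restrict, hf_def,
          integral_prod_mul (μ := μ.restrict Set.univ) (ν := ν.restrict Set.univ)
            (α.rnDeriv μ) (β.rnDeriv ν),
          ← withDensityᵥ_apply hfα MeasurableSet.univ,
          ← withDensityᵥ_apply hfβ MeasurableSet.univ, hαeq, hβeq]
      have h1 : ω tᶜ = ω Set.univ - ω t := by
        rw [Set.compl_eq_univ_diff]
        exact VectorMeasure.of_diff htm MeasurableSet.univ (Set.subset_univ t)
      have h2 : ((μ.prod ν).withDensityᵥ f) tᶜ
          = ((μ.prod ν).withDensityᵥ f) Set.univ - ((μ.prod ν).withDensityᵥ f) t := by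
        rw [Set.compl_eq_univ_diff]
        exact VectorMeasure.of_diff htm MeasurableSet.univ (Set.subset_univ t)
      rw [h1, h2, huniv, ht]
    · intro g hdisj hgm hg
      rw [VectorMeasure.of_disjoint_iUnion hgm hdisj,
        VectorMeasure.of_disjoint_iUnion hgm hdisj]
      exact tsum_congr hg
  constructor
  · rw [key]
    exact Measure.withDensityᵥ_absolutelyContinuous _ _
  · exact (SignedMeasure.eq_rnDeriv (μ := μ.prod ν) 0 f hf
      (VectorMeasure.MutuallySingular.zero_left) (by rw [zero_add, key])).symm
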